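/- Minimum labelings of geometric lattices are EW-labelings: let L be a finite geometric lattice with atom set A(L) totally ordered, and define λ(x ⋖ y) to be the smallest atom a with x ∨ a = y. Then λ is an ER-labeling satisfying the rank two switching property, and in each interval each maximal chain is uniquely determined by its word of labels. -/

import Mathlib

attribute [local instance] Classical.propDecidable

/-- The Möbius function of a finite poset (preorder suffices for the recursion),
defined by `μ x x = 1` and `μ x y = -∑_{x ≤ z < y} μ x z`. -/
noncomputable def mobius {P : Type} [Preorder P] [Fintype P] (x : P) : P → ℤ
  | y =>
    if x = y then 1
    else -∑ z ∈ (Finset.univ.filter fun z : P => x ≤ z ∧ z < y).attach, mobius x z.1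
termination_by y => (Finset.univ.filter fun z : P => z < y).card
decreasing_by
  have hz := z.2
  simp only [Finset.mem_filter] at hz
  refine Finset.card_lt_card ((Finset.ssubset_iff_of_subset fun w hw => ?_).mpr ⟨z.1, ?_, ?_⟩)
  · simp only [Finset.mem_filter] at hw ⊢
    exact ⟨hw.1, hw.2.trans hz.2.2⟩
  · simp only [Finset.mem_filter]
    exact ⟨Finset.mem_univ _, hz.2.2⟩
  · simp only [Finset.mem_filter, not_and]
    exact fun _ => lt_irrefl _

/-- The `k`-th Whitney number of the first kind of a finite graded poset with
minimum `b` and rank function `ρ`: `w_k = ∑_{ρ x = k} μ(b, x)`. -/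
noncomputable def whitney1 {P : Type} [Preorder P] [Fintype P] (ρ : P → ℕ) (b : P) (k : ℕ) : ℤ :=
  ∑ x ∈ Finset.univ.filter fun x : P => ρ x = k, mobius b x

/-- The `k`-th Whitney number of the second kind: the number of elements of rank `k`. -/
noncomputable def whitney2 {P : Type} [Preorder P] [Fintype P] (ρ : P → ℕ) (k : ℕ) : ℕ :=
  (Finset.univ.filter fun x : P => ρ x = k).card
/-- A saturated chain in a poset: a nonempty list of elements in which each
consecutive pair is a covering relation. -/
def IsSatChain {P : Type} [PartialOrder P] (l : List P) : Prop :=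
  l ≠ [] ∧ l.Chain' (· ⋖ ·)

/-- A saturated (maximal) chain of the closed interval `[x, y]`: a saturated chain
starting at `x` and ending at `y`. -/
def SatChainIn {P : Type} [PartialOrder P] (x y : P) (l : List P) : Prop :=
  IsSatChain l ∧ l.head? = some x ∧ l.getLast? = some y

/-- The word of labels of a chain `x₀ ⋖ x₁ ⋖ ⋯ ⋖ x_ℓ` under the edge labeling `lab`,
namely `lab x₀ x₁, lab x₁ x₂, …, lab x_{ℓ-1} x_ℓ`. -/
def labelWord {P Λ : Type} (lab : P → P → Λ) (l : List P) : List Λ :=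
  (l.zip l.tail).map fun q => lab q.1 q.2

/-- A word of labels is (strictly) increasing. -/
def IsIncreasing {Λ : Type} [Preorder Λ] (w : List Λ) : Prop := w.Chain' (· < ·)

/-- A word of labels is ascent-free: no two consecutive labels strictly increase. -/
def IsAscentFree {Λ : Type} [Preorder Λ] (w : List Λ) : Prop :=
  w.Chain' fun a b => ¬ a < b

/-- An ER-labeling: every closed interval `[x,y]` has a unique increasing maximal chain. -/
def IsER {P Λ : Type} [PartialOrder P] [Preorder Λ] (lab : P → P → Λ) : Prop :=
  ∀ x y : P, x ≤ y → ∃! l : List P, SatChainIn x y l ∧ IsIncreasing (labelWord lab l)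

/-- An ER*-labeling: every closed interval `[x,y]` has a unique ascent-free maximal chain. -/
def IsERStar {P Λ : Type} [PartialOrder P] [Preorder Λ] (lab : P → P → Λ) : Prop :=
  ∀ x y : P, x ≤ y → ∃! l : List P, SatChainIn x y l ∧ IsAscentFree (labelWord lab l)

/-- The chain `l` has an ascent at rank `i ≥ 1`: the `(i-1)`-st and `i`-th entries of its
label word (0-indexed), i.e. the labels of the covers at ranks `i` and `i+1`,
strictly increase. -/
def HasAscentAt {P Λ : Type} [PartialOrder P] [Preorder Λ] (lab : P → P → Λ)
    (l : List P) (i : ℕ) : Prop :=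
  IsSatChain l ∧ 1 ≤ i ∧
    ∃ a b, (labelWord lab l)[i-1]? = some a ∧ (labelWord lab l)[i]? = some b ∧ a < b

/-- `l'` is obtained from `l` by a quadratic exchange at rank `i`: it is a saturated
chain agreeing with `l` everywhere except (possibly) at position `i`, and its label
word is that of `l` with the labels at positions `i-1` and `i` interchanged. -/
def IsSwapAt {P Λ : Type} [PartialOrder P] [Preorder Λ] (lab : P → P → Λ)
    (l : List P) (i : ℕ) (l' : List P) : Prop :=
  IsSatChain l' ∧ l'.length = l.length ∧ (∀ m : ℕ, m ≠ i → l'[m]? = l[m]?) ∧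
    ∃ a b, (labelWord lab l)[i-1]? = some a ∧ (labelWord lab l)[i]? = some b ∧
      labelWord lab l' = ((labelWord lab l).set (i-1) b).set i a

/-- The rank two switching property: every saturated chain with an ascent at rank `i`
admits a unique chain, differing from it only at rank `i`, whose labels at the two
corresponding positions are interchanged and whose other labels agree. -/
def RankTwoSwitch {P Λ : Type} [PartialOrder P] [Preorder Λ] (lab : P → P → Λ) : Prop :=
  ∀ l : List P, ∀ i : ℕ, HasAscentAt lab l i → ∃! l' : List P, IsSwapAt lab l i l'

/-- The quadratic exchange operator `U_i` at rank `i`: performs the quadratic exchange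
at rank `i` if the chain has an ascent there, and is the identity otherwise. -/
noncomputable def Uop {P Λ : Type} [PartialOrder P] [Preorder Λ] {lab : P → P → Λ}
    (hR : RankTwoSwitch lab) (i : ℕ) (l : List P) : List P :=
  if h : HasAscentAt lab l i then (hR l i h).exists.choose else l

/-- One-step quadratic exchange relation on saturated chains. -/
def QExStep {P Λ : Type} [PartialOrder P] [Preorder Λ] (lab : P → P → Λ)
    (l l' : List P) : Prop :=
  ∃ i : ℕ, HasAscentAt lab l i ∧ IsSwapAt lab l i l'

/-- Two saturated chains are equivalent if they are connected by quadratic exchanges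
(i.e., lie in the same connected component of the exchange graph). -/
def ChainEquiv {P Λ : Type} [PartialOrder P] [Preorder Λ] (lab : P → P → Λ)
    (l l' : List P) : Prop :=
  Relation.EqvGen (QExStep lab) l l'

/-- The chain `l` has a double ascent (critical condition) at rank `i`. -/
def DoubleAscentAt {P Λ : Type} [PartialOrder P] [Preorder Λ] (lab : P → P → Λ)
    (l : List P) (i : ℕ) : Prop :=
  HasAscentAt lab l i ∧ HasAscentAt lab l (i+1)

/-- The braid relation for the quadratic exchange operators: on any saturated chain with
a double ascent at rank `i`, `U_i U_{i+1} U_i = U_{i+1} U_i U_{i+1}`. -/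
def BraidRel {P Λ : Type} [PartialOrder P] [Preorder Λ] {lab : P → P → Λ}
    (hR : RankTwoSwitch lab) : Prop :=
  ∀ (l : List P) (i : ℕ), DoubleAscentAt lab l i →
    Uop hR i (Uop hR (i+1) (Uop hR i l)) = Uop hR (i+1) (Uop hR i (Uop hR (i+1) l))

/-- The cancellative property: if `c` is a saturated chain of `[z,x]` and `c₁, c₂` are
saturated chains of `[x,y]` with `c ∪ c₁` and `c ∪ c₂` related by quadratic exchanges,
then `c₁` and `c₂` are related by quadratic exchanges. -/
def Cancellative {P Λ : Type} [PartialOrder P] [Preorder Λ] (lab : P → P → Λ) : Prop :=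
  ∀ (z x y : P) (c c₁ c₂ : List P), SatChainIn z x c → SatChainIn x y c₁ →
    SatChainIn x y c₂ → ChainEquiv lab (c ++ c₁.tail) (c ++ c₂.tail) →
      ChainEquiv lab c₁ c₂

set_option linter.unusedSectionVars false
set_option linter.unusedVariables false

section ListLemmas
variable {P Λ : Type} [PartialOrder P] {lab : P → P → Λ}

lemma labelWord_singleton (p : P) : labelWord lab [p] = [] := rfl

lemma labelWord_cons_cons (p q : P) (k : List P) :
    labelWord lab (p :: q :: k) = lab p q :: labelWord lab (q :: k) := rfl

lemma labelWord_length (l : List P) : (labelWord lab l).length = l.length - 1 := by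
  simp only [labelWord, List.length_map, List.length_zip, List.length_tail]
  omega

lemma labelWord_getElem? (l : List P) (j : ℕ) {u v : P}
    (hu : l[j]? = some u) (hv : l[j + 1]? = some v) :
    (labelWord lab l)[j]? = some (lab u v) := by
  obtain ⟨h1, rfl⟩ := List.getElem?_eq_some_iff.1 hu
  obtain ⟨h2, rfl⟩ := List.getElem?_eq_some_iff.1 hv
  have hj : j < (labelWord lab l).length := by rw [labelWord_length]; omega
  rw [List.getElem?_eq_getElem hj]
  congr 1
  simp only [labelWord]
  rw [List.getElem_map, List.getElem_zip]
  congr 1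
  exact List.getElem_tail _

lemma labelWord_getElem?_none (l : List P) (j : ℕ) (h : ¬ j + 1 < l.length) :
    (labelWord lab l)[j]? = none := by
  apply List.getElem?_eq_none
  rw [labelWord_length]; omega

lemma labelWord_getElem?_some {l : List P} {j : ℕ} {c : Λ}
    (h : (labelWord lab l)[j]? = some c) :
    ∃ u v, l[j]? = some u ∧ l[j + 1]? = some v ∧ c = lab u v := by
  have hlen : j < (labelWord lab l).length := (List.getElem?_eq_some_iff.1 h).1
  rw [labelWord_length] at hlen
  have h1 : j < l.length := by omega
  have h2 : j + 1 < l.length := by omega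
  refine ⟨l[j], l[j+1], List.getElem?_eq_getElem h1, List.getElem?_eq_getElem h2, ?_⟩
  have := labelWord_getElem? (lab := lab) l j (List.getElem?_eq_getElem h1)
    (List.getElem?_eq_getElem h2)
  rw [h] at this
  exact Option.some.inj this

lemma chain'_pair {R : P → P → Prop} {l : List P} (h : List.Chain' R l) {j : ℕ} {u v : P}
    (hu : l[j]? = some u) (hv : l[j + 1]? = some v) : R u v := by
  obtain ⟨h1, rfl⟩ := List.getElem?_eq_some_iff.1 hu
  obtain ⟨h2, rfl⟩ := List.getElem?_eq_some_iff.1 hv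
  rw [List.Chain', List.isChain_iff_getElem] at h
  have := h j (by omega)
  simpa [List.get_eq_getElem] using this

lemma chain'_of_pairs {R : P → P → Prop} {l : List P}
    (h : ∀ j (u v : P), l[j]? = some u → l[j + 1]? = some v → R u v) : List.Chain' R l := by
  rw [List.Chain', List.isChain_iff_getElem]
  intro j hj
  exact h j _ _ (List.getElem?_eq_getElem (by omega)) (List.getElem?_eq_getElem (by omega))

lemma satChainIn_single {x y p : P} (h : SatChainIn x y [p]) : p = x ∧ x = y := by
  obtain ⟨_, hh, hl⟩ := h
  simp only [List.head?_cons, Option.some.injEq] at hh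
  simp only [List.getLast?_singleton, Option.some.injEq] at hl
  exact ⟨hh, hh ▸ hl⟩

lemma satChainIn_cons_cons {x y p q : P} {k : List P} (h : SatChainIn x y (p :: q :: k)) :
    p = x ∧ x ⋖ q ∧ SatChainIn q y (q :: k) := by
  obtain ⟨⟨_, hch⟩, hh, hl⟩ := h
  simp only [List.head?_cons, Option.some.injEq] at hh
  rw [List.getLast?_cons_cons] at hl
  rw [List.Chain', List.isChain_cons_cons] at hch
  exact ⟨hh, hh ▸ hch.1, ⟨⟨List.cons_ne_nil _ _, hch.2⟩, rfl, hl⟩⟩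

lemma SatChainIn.le' {x y : P} : ∀ {l : List P}, SatChainIn x y l → x ≤ y := by
  intro l
  induction l generalizing x with
  | nil => intro h; exact absurd h.2.1 (by simp)
  | cons p k ih =>
    intro h
    cases k with
    | nil => obtain ⟨_, rfl⟩ := satChainIn_single h; exact le_refl _
    | cons q k' =>
      obtain ⟨rfl, hcov, htail⟩ := satChainIn_cons_cons h
      exact hcov.le.trans (ih htail)

lemma satChainIn_self {x : P} : SatChainIn x x [x] :=
  ⟨⟨List.cons_ne_nil _ _, List.isChain_singleton _⟩, rfl, rfl⟩

lemma satChainIn_eq_single {x : P} {l : List P} (h : SatChainIn x x l) : l = [x] := by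
  cases l with
  | nil => exact absurd h.2.1 (by simp)
  | cons p k =>
    cases k with
    | nil => obtain ⟨rfl, _⟩ := satChainIn_single h; rfl
    | cons q k' =>
      obtain ⟨rfl, hcov, htail⟩ := satChainIn_cons_cons h
      exact absurd (hcov.lt.trans_le htail.le') (lt_irrefl _)

lemma satChainIn_cons {x z y : P} {l : List P} (hcov : x ⋖ z) (h : SatChainIn z y l) :
    SatChainIn x y (x :: l) := by
  cases l with
  | nil => exact absurd h.2.1 (by simp)
  | cons p k =>
    obtain ⟨⟨_, hch⟩, hh, hl⟩ := h
    simp only [List.head?_cons, Option.some.injEq] at hh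
    subst hh
    exact ⟨⟨List.cons_ne_nil _ _, List.isChain_cons_cons.2 ⟨hcov, hch⟩⟩, rfl,
      by rw [List.getLast?_cons_cons]; exact hl⟩

lemma satChainIn_transition {x y a : P} : ∀ {l : List P}, SatChainIn x y l → ¬ a ≤ x → a ≤ y →
    ∃ u v : P, u ⋖ v ∧ ¬ a ≤ u ∧ a ≤ v ∧ (u, v) ∈ l.zip l.tail := by
  intro l
  induction l generalizing x with
  | nil => intro h; exact absurd h.2.1 (by simp)
  | cons p k ih =>
    intro h hax hay
    cases k with
    | nil =>
      obtain ⟨rfl, rfl⟩ := satChainIn_single h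
      exact absurd hay hax
    | cons q k' =>
      obtain ⟨rfl, hcov, htail⟩ := satChainIn_cons_cons h
      by_cases haq : a ≤ q
      · exact ⟨p, q, hcov, hax, haq, by simp⟩
      · obtain ⟨u, v, h1, h2, h3, h4⟩ := ih htail haq hay
        exact ⟨u, v, h1, h2, h3, by simp only [List.zip, List.tail_cons]; right; exact h4⟩

lemma mem_labelWord_of_pair {l : List P} {u v : P} (h : (u, v) ∈ l.zip l.tail) :
    lab u v ∈ labelWord lab l :=
  List.mem_map.2 ⟨(u, v), h, rfl⟩

lemma head_le_of_increasing {Λ' : Type} [LinearOrder Λ'] {c : Λ'} {w : List Λ'}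
    (h : IsIncreasing (c :: w)) {d : Λ'} (hd : d ∈ c :: w) : c ≤ d := by
  rw [IsIncreasing, List.Chain', List.isChain_iff_pairwise] at h
  rcases List.mem_cons.mp hd with rfl | hd
  · exact le_refl _
  · exact ((List.pairwise_cons.mp h).1 d hd).le

end ListLemmas

section LatticeLemmas
variable {L : Type} [Lattice L] [Fintype L] [OrderBot L]
  (hatomistic : ∀ x : L, ∃ S : Finset L, (∀ a ∈ S, IsAtom a) ∧ x = S.sup id)
  (hsemimod : ∀ a b : L, a ⊓ b ⋖ a → b ⋖ a ⊔ b)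
  (ord : L → ℕ) (hord : ∀ a b : L, IsAtom a → IsAtom b → ord a = ord b → a = b)
  (lab : L → L → L)
  (hlab : ∀ x y : L, x ⋖ y → IsAtom (lab x y) ∧ x ⊔ lab x y = y ∧
    ∀ a : L, IsAtom a → x ⊔ a = y → ord (lab x y) ≤ ord a)

include hsemimod in
lemma atom_cover {a x : L} (ha : IsAtom a) (hax : ¬ a ≤ x) : x ⋖ x ⊔ a := by
  have h1 : a ⊓ x = ⊥ := by
    rcases (ha.le_iff.mp inf_le_left) with h | h
    · exact h
    · exact absurd (inf_eq_left.mp h) hax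
  have h2 : a ⊓ x ⋖ a := h1 ▸ ha.bot_covBy
  have := hsemimod a x h2
  rwa [sup_comm] at this

lemma cover_sup_atom {x y a : L} (hcov : x ⋖ y) (ha : IsAtom a) (h1 : a ≤ y)
    (h2 : ¬ a ≤ x) : x ⊔ a = y := by
  have hlt : x < x ⊔ a := left_lt_sup.mpr h2
  rcases hcov.eq_or_eq le_sup_left (sup_le hcov.le h1) with h | h
  · exact absurd h hlt.ne'
  · exact h

include hlab in
lemma lab_atom {x y : L} (hcov : x ⋖ y) : IsAtom (lab x y) := (hlab x y hcov).1

include hlab in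
lemma lab_sup {x y : L} (hcov : x ⋖ y) : x ⊔ lab x y = y := (hlab x y hcov).2.1

include hlab in
lemma lab_le {x y : L} (hcov : x ⋖ y) : lab x y ≤ y :=
  le_sup_right.trans_eq (hlab x y hcov).2.1

include hlab in
lemma lab_not_le {x y : L} (hcov : x ⋖ y) : ¬ lab x y ≤ x := fun h =>
  hcov.ne ((sup_eq_left.mpr h).symm.trans (hlab x y hcov).2.1)

include hlab in
lemma lab_min {x y a : L} (hcov : x ⋖ y) (ha : IsAtom a) (h1 : a ≤ y) (h2 : ¬ a ≤ x) :
    ord (lab x y) ≤ ord a :=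
  (hlab x y hcov).2.2 a ha (cover_sup_atom hcov ha h1 h2)

include hord hlab in
lemma lab_eq_of_min {x y a : L} (hcov : x ⋖ y) (ha : IsAtom a) (h1 : a ≤ y) (h2 : ¬ a ≤ x)
    (hmin : ∀ b : L, IsAtom b → b ≤ y → ¬ b ≤ x → ord a ≤ ord b) : lab x y = a :=
  hord _ _ (lab_atom ord lab hlab hcov) ha
    (le_antisymm (lab_min ord lab hlab hcov ha h1 h2)
      (hmin _ (lab_atom ord lab hlab hcov) (lab_le ord lab hlab hcov)
        (lab_not_le ord lab hlab hcov)))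

include hatomistic in
lemma exists_minAtom {x y : L} (hxy : x < y) :
    ∃ a : L, IsAtom a ∧ a ≤ y ∧ ¬ a ≤ x ∧
      ∀ b : L, IsAtom b → b ≤ y → ¬ b ≤ x → ord a ≤ ord b := by
  classical
  have hne : (Finset.univ.filter fun b : L => IsAtom b ∧ b ≤ y ∧ ¬ b ≤ x).Nonempty := by
    obtain ⟨S, hS, hsup⟩ := hatomistic y
    by_contra hemp
    rw [Finset.not_nonempty_iff_eq_empty] at hemp
    have : ∀ a ∈ S, a ≤ x := by
      intro a haS
      by_contra hax
      have haY : a ≤ y := hsup ▸ Finset.le_sup (f := id) haS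
      have : a ∈ Finset.univ.filter fun b : L => IsAtom b ∧ b ≤ y ∧ ¬ b ≤ x := by
        simp [hS a haS, haY, hax]
      rw [hemp] at this
      exact absurd this (Finset.notMem_empty _)
    exact absurd (hsup ▸ Finset.sup_le fun a haS => this a haS) hxy.not_ge
  obtain ⟨a, haMem, haMin⟩ := Finset.exists_min_image _ ord hne
  simp only [Finset.mem_filter, Finset.mem_univ, true_and] at haMem
  refine ⟨a, haMem.1, haMem.2.1, haMem.2.2, fun b hb h1 h2 => haMin b ?_⟩
  simp [hb, h1, h2]

end LatticeLemmas

section ER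
variable {L : Type} [Lattice L] [Fintype L] [OrderBot L]
  (hatomistic : ∀ x : L, ∃ S : Finset L, (∀ a ∈ S, IsAtom a) ∧ x = S.sup id)
  (hsemimod : ∀ a b : L, a ⊓ b ⋖ a → b ⋖ a ⊔ b)
  (ord : L → ℕ) (hord : ∀ a b : L, IsAtom a → IsAtom b → ord a = ord b → a = b)
  (lab : L → L → L)
  (hlab : ∀ x y : L, x ⋖ y → IsAtom (lab x y) ∧ x ⊔ lab x y = y ∧
    ∀ a : L, IsAtom a → x ⊔ a = y → ord (lab x y) ≤ ord a)

include hatomistic hsemimod hord hlab in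
lemma ER_aux : ∀ (n : ℕ) (x y : L),
    (Finset.univ.filter fun z : L => x < z ∧ z ≤ y).card ≤ n → x ≤ y →
    ∃! l : List L, SatChainIn x y l ∧
      IsIncreasing (labelWord (fun u v : L => ord (lab u v)) l) := by
  intro n
  induction n with
  | zero =>
    intro x y hcard hxy
    have hxy' : x = y := by
      rcases eq_or_lt_of_le hxy with h | h
      · exact h
      · exfalso
        have hpos : 0 < (Finset.univ.filter fun z : L => x < z ∧ z ≤ y).card :=
          Finset.card_pos.mpr ⟨y, by
            simp only [Finset.mem_filter, Finset.mem_univ, true_and]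
            exact ⟨h, le_refl _⟩⟩
        omega
    subst hxy'
    exact ⟨[x], ⟨satChainIn_self, List.isChain_nil⟩, fun l hl => satChainIn_eq_single hl.1⟩
  | succ n ih =>
    intro x y hcard hxy
    rcases eq_or_lt_of_le hxy with rfl | hlt
    · exact ⟨[x], ⟨satChainIn_self, List.isChain_nil⟩, fun l hl => satChainIn_eq_single hl.1⟩
    obtain ⟨a, ha, hay, hax, hamin⟩ := exists_minAtom hatomistic ord hlt
    have hcov : x ⋖ x ⊔ a := atom_cover hsemimod ha hax
    set x' := x ⊔ a with hx'
    have hx'y : x' ≤ y := sup_le hxy hay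
    have hlabxx' : lab x x' = a :=
      lab_eq_of_min ord hord lab hlab hcov ha le_sup_right hax
        (fun b hb h1 h2 => hamin b hb (h1.trans hx'y) h2)
    have hcard' : (Finset.univ.filter fun z : L => x' < z ∧ z ≤ y).card ≤ n := by
      have hsub : (Finset.univ.filter fun z : L => x' < z ∧ z ≤ y) ⊆
          (Finset.univ.filter fun z : L => x < z ∧ z ≤ y) := by
        intro w hw
        simp only [Finset.mem_filter, Finset.mem_univ, true_and] at hw ⊢
        exact ⟨hcov.lt.trans hw.1, hw.2⟩
      have hssub : (Finset.univ.filter fun z : L => x' < z ∧ z ≤ y) ⊂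
          (Finset.univ.filter fun z : L => x < z ∧ z ≤ y) := by
        refine (Finset.ssubset_iff_of_subset hsub).mpr ⟨x', ?_, ?_⟩
        · simp only [Finset.mem_filter, Finset.mem_univ, true_and]
          exact ⟨hcov.lt, hx'y⟩
        · simp only [Finset.mem_filter, Finset.mem_univ, true_and, not_and]
          exact fun h => absurd h (lt_irrefl x')
      have := Finset.card_lt_card hssub
      omega
    obtain ⟨l₀, ⟨hl₀c, hl₀i⟩, huniq⟩ := ih x' y hcard' hx'y
    -- The candidate chain is `x :: l₀`.
    have hchain : SatChainIn x y (x :: l₀) := satChainIn_cons hcov hl₀c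
    have hinc : IsIncreasing (labelWord (fun u v : L => ord (lab u v)) (x :: l₀)) := by
      cases l₀ with
      | nil => exact absurd hl₀c.2.1 (by simp)
      | cons p k =>
        have hp : p = x' := by
          have := hl₀c.2.1; simp only [List.head?_cons, Option.some.injEq] at this; exact this
        subst hp
        rw [labelWord_cons_cons]
        refine List.isChain_cons.mpr ⟨?_, hl₀i⟩
        intro d hd
        cases k with
        | nil => simp [labelWord_singleton] at hd
        | cons q k' =>
          rw [labelWord_cons_cons] at hd
          simp only [List.head?_cons, Option.mem_def, Option.some.injEq] at hd
          subst hd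
          obtain ⟨-, hcovq, htail⟩ := satChainIn_cons_cons hl₀c
          have hc : IsAtom (lab x' q) := lab_atom ord lab hlab hcovq
          have hcy : lab x' q ≤ y := (lab_le ord lab hlab hcovq).trans htail.le'
          have hcx' : ¬ lab x' q ≤ x' := lab_not_le ord lab hlab hcovq
          have hcx : ¬ lab x' q ≤ x := fun h => hcx' (h.trans le_sup_left)
          have h1 : ord a ≤ ord (lab x' q) := hamin _ hc hcy hcx
          have h2 : ord a ≠ ord (lab x' q) := fun h =>
            hcx' ((hord a _ ha hc h) ▸ le_sup_right)
          rw [hlabxx']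
          exact lt_of_le_of_ne h1 h2
    refine ⟨x :: l₀, ⟨hchain, hinc⟩, ?_⟩
    rintro l ⟨hlc, hli⟩
    cases l with
    | nil => exact absurd hlc.2.1 (by simp)
    | cons p k =>
      have hp : p = x := by
        have := hlc.2.1; simp only [List.head?_cons, Option.some.injEq] at this; exact this
      cases k with
      | nil =>
        rw [hp] at hlc
        obtain ⟨-, h⟩ := satChainIn_single hlc
        exact absurd h hlt.ne
      | cons q k' =>
        rw [hp] at hlc hli
        obtain ⟨-, hcovq, htail⟩ := satChainIn_cons_cons hlc
        have hq : q = x' := by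
          have hc : IsAtom (lab x q) := lab_atom ord lab hlab hcovq
          have hcy : lab x q ≤ y := (lab_le ord lab hlab hcovq).trans htail.le'
          have hcx : ¬ lab x q ≤ x := lab_not_le ord lab hlab hcovq
          have h1 : ord a ≤ ord (lab x q) := hamin _ hc hcy hcx
          obtain ⟨u, v, hcuv, hau, hav, hpair⟩ := satChainIn_transition hlc hax hay
          have huv : ord (lab u v) ≤ ord a := lab_min ord lab hlab hcuv ha hav hau
          have hmem : (fun u v : L => ord (lab u v)) u v ∈
              labelWord (fun u v : L => ord (lab u v)) (x :: q :: k') :=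
            mem_labelWord_of_pair hpair
          rw [labelWord_cons_cons] at hmem hli
          have h2 : ord (lab x q) ≤ ord (lab u v) := head_le_of_increasing hli hmem
          have heq : ord (lab x q) = ord a := le_antisymm (h2.trans huv) h1
          have hlq : lab x q = a := hord _ _ hc ha heq
          rw [← lab_sup ord lab hlab hcovq, hlq]
        rw [hq] at htail
        have htail_inc : IsIncreasing
            (labelWord (fun u v : L => ord (lab u v)) (x' :: k')) := by
          rw [labelWord_cons_cons] at hli
          have := hli.tail
          rw [hq] at this
          exact this
        rw [hp, hq, huniq (x' :: k') ⟨htail, htail_inc⟩]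
end ER

section Inj
variable {L : Type} [Lattice L] [Fintype L] [OrderBot L]
  (hsemimod : ∀ a b : L, a ⊓ b ⋖ a → b ⋖ a ⊔ b)
  (ord : L → ℕ) (hord : ∀ a b : L, IsAtom a → IsAtom b → ord a = ord b → a = b)
  (lab : L → L → L)
  (hlab : ∀ x y : L, x ⋖ y → IsAtom (lab x y) ∧ x ⊔ lab x y = y ∧
    ∀ a : L, IsAtom a → x ⊔ a = y → ord (lab x y) ≤ ord a)

include hord hlab in
lemma word_inj : ∀ (l l' : List L) (x y : L), SatChainIn x y l → SatChainIn x y l' →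
    labelWord (fun u v : L => ord (lab u v)) l =
      labelWord (fun u v : L => ord (lab u v)) l' → l = l' := by
  intro l
  induction l with
  | nil => intro l' x y h; exact absurd h.2.1 (by simp)
  | cons p k ih =>
    intro l' x y hl hl' hw
    cases l' with
    | nil => exact absurd hl'.2.1 (by simp)
    | cons p' k' =>
      have hp : p = x := by
        have := hl.2.1; simp only [List.head?_cons, Option.some.injEq] at this; exact this
      have hp' : p' = x := by
        have := hl'.2.1; simp only [List.head?_cons, Option.some.injEq] at this; exact this
      rw [hp, hp'] at hw
      cases k with
      | nil =>
        rw [hp] at hl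
        obtain ⟨-, hxy⟩ := satChainIn_single hl
        cases k' with
        | nil => rw [hp, hp']
        | cons q' k'' =>
          rw [hp'] at hl'
          obtain ⟨-, hcov, htail⟩ := satChainIn_cons_cons hl'
          exact absurd (hcov.lt.trans_le (hxy ▸ htail.le')) (lt_irrefl _)
      | cons q k₂ =>
        cases k' with
        | nil =>
          rw [hp] at hl
          rw [hp'] at hl'
          obtain ⟨-, hxy⟩ := satChainIn_single hl'
          obtain ⟨-, hcov, htail⟩ := satChainIn_cons_cons hl
          exact absurd (hcov.lt.trans_le (hxy ▸ htail.le')) (lt_irrefl _)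
        | cons q' k₂' =>
          rw [hp] at hl
          rw [hp'] at hl'
          obtain ⟨-, hcov, htail⟩ := satChainIn_cons_cons hl
          obtain ⟨-, hcov', htail'⟩ := satChainIn_cons_cons hl'
          rw [labelWord_cons_cons, labelWord_cons_cons] at hw
          have hhead : ord (lab x q) = ord (lab x q') := (List.cons.injEq _ _ _ _ ▸ hw).1
          have hq : q = q' := by
            have := hord _ _ (lab_atom ord lab hlab hcov) (lab_atom ord lab hlab hcov') hhead
            rw [← lab_sup ord lab hlab hcov, ← lab_sup ord lab hlab hcov', this]
          subst hq
          have htl : labelWord (fun u v : L => ord (lab u v)) (q :: k₂) =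
              labelWord (fun u v : L => ord (lab u v)) (q :: k₂') :=
            (List.cons.injEq _ _ _ _ ▸ hw).2
          have := ih (q :: k₂') q y htail htail' htl
          rw [hp, hp']
          exact congrArg (List.cons x) this
end Inj

section Exchange
variable {L : Type} [Lattice L] [Fintype L] [OrderBot L]
  (hsemimod : ∀ a b : L, a ⊓ b ⋖ a → b ⋖ a ⊔ b)
  (ord : L → ℕ) (hord : ∀ a b : L, IsAtom a → IsAtom b → ord a = ord b → a = b)
  (lab : L → L → L)
  (hlab : ∀ x y : L, x ⋖ y → IsAtom (lab x y) ∧ x ⊔ lab x y = y ∧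
    ∀ a : L, IsAtom a → x ⊔ a = y → ord (lab x y) ≤ ord a)

include hsemimod hord hlab in
lemma exchange {u v w : L} (hcuv : u ⋖ v) (hcvw : v ⋖ w)
    (hasc : ord (lab u v) < ord (lab v w)) :
    u ⋖ u ⊔ lab v w ∧ (u ⊔ lab v w) ⋖ w ∧
      lab u (u ⊔ lab v w) = lab v w ∧ lab (u ⊔ lab v w) w = lab u v := by
  set a := lab u v with hadef
  set b := lab v w with hbdef
  have ha : IsAtom a := lab_atom ord lab hlab hcuv
  have hb : IsAtom b := lab_atom ord lab hlab hcvw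
  have hav : a ≤ v := lab_le ord lab hlab hcuv
  have hbw : b ≤ w := lab_le ord lab hlab hcvw
  have hanu : ¬ a ≤ u := lab_not_le ord lab hlab hcuv
  have hbnv : ¬ b ≤ v := lab_not_le ord lab hlab hcvw
  have hbnu : ¬ b ≤ u := fun h => hbnv (h.trans hcuv.le)
  set v' := u ⊔ b with hv'
  have E1 : u ⋖ v' := atom_cover hsemimod hb hbnu
  have hv'w : v' ≤ w := sup_le (hcuv.le.trans hcvw.le) hbw
  have hv'ne : v' ≠ v := fun h => hbnv (h ▸ le_sup_right)
  have hinf : v' ⊓ v = u := by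
    rcases E1.eq_or_eq (le_inf le_sup_left hcuv.le) inf_le_left with h | h
    · exact h
    · exfalso
      have hv'v : v' ≤ v := inf_eq_left.mp h
      rcases hcuv.eq_or_eq E1.le hv'v with h2 | h2
      · exact E1.ne h2.symm
      · exact hv'ne h2
  have E2 : v' ⋖ w := by
    have hsemi := hsemimod v v' (by rw [inf_comm, hinf]; exact hcuv)
    have hvv'w : v ⊔ v' = w := by
      rcases hcvw.eq_or_eq le_sup_left (sup_le hcvw.le hv'w) with h | h
      · exfalso
        have hv'v : v' ≤ v := sup_eq_left.mp h
        rcases hcuv.eq_or_eq E1.le hv'v with h2 | h2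
        · exact E1.ne h2.symm
        · exact hv'ne h2
      · exact h
    rwa [hvv'w] at hsemi
  have E3 : lab u v' = b := by
    refine lab_eq_of_min ord hord lab hlab E1 hb le_sup_right hbnu ?_
    intro c hc h1 h2
    have hcnv : ¬ c ≤ v := fun h => h2 ((le_inf h1 h).trans_eq hinf)
    exact lab_min ord lab hlab hcvw hc (h1.trans hv'w) hcnv
  have E4 : lab v' w = a := by
    have hanv' : ¬ a ≤ v' := fun h => hanu ((le_inf h hav).trans_eq hinf)
    refine lab_eq_of_min ord hord lab hlab E2 ha (hav.trans hcvw.le) hanv' ?_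
    intro c hc h1 h2
    by_cases hcv : c ≤ v
    · have hcnu : ¬ c ≤ u := fun h => h2 (h.trans le_sup_left)
      exact lab_min ord lab hlab hcuv hc hcv hcnu
    · exact (lab_min ord lab hlab hcvw hc h1 hcv).trans' hasc.le
  exact ⟨E1, E2, E3, E4⟩
end Exchange

section Switch
variable {L : Type} [Lattice L] [Fintype L] [OrderBot L]
  (hsemimod : ∀ a b : L, a ⊓ b ⋖ a → b ⋖ a ⊔ b)
  (ord : L → ℕ) (hord : ∀ a b : L, IsAtom a → IsAtom b → ord a = ord b → a = b)
  (lab : L → L → L)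
  (hlab : ∀ x y : L, x ⋖ y → IsAtom (lab x y) ∧ x ⊔ lab x y = y ∧
    ∀ a : L, IsAtom a → x ⊔ a = y → ord (lab x y) ≤ ord a)

include hsemimod hord hlab in
lemma switch_aux : RankTwoSwitch (fun u v : L => ord (lab u v)) := by
  intro l i hA
  obtain ⟨⟨hnil, hch⟩, hi1, α, β, hα, hβ, hαβ⟩ := hA
  have hi : i - 1 + 1 = i := by omega
  obtain ⟨u, v, hu, hv, hαeq⟩ := labelWord_getElem?_some hα
  rw [hi] at hv
  obtain ⟨v₂, w, hv₂, hw, hβeq⟩ := labelWord_getElem?_some hβ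
  rw [Option.some.inj (hv₂.symm.trans hv)] at hβeq
  clear hv₂
  have hcuv : u ⋖ v := chain'_pair hch hu (by rw [hi]; exact hv)
  have hcvw : v ⋖ w := chain'_pair hch hv hw
  have hasc : ord (lab u v) < ord (lab v w) := by rw [← hαeq, ← hβeq]; exact hαβ
  obtain ⟨E1, E2, E3, E4⟩ := exchange hsemimod ord hord lab hlab hcuv hcvw hasc
  set v' := u ⊔ lab v w with hv'def
  have hilen : i < l.length := (List.getElem?_eq_some_iff.1 hv).1
  have hi1len : i + 1 < l.length := (List.getElem?_eq_some_iff.1 hw).1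
  set l' := l.set i v' with hl'def
  have hgi : l'[i]? = some v' := List.getElem?_set_self hilen
  have hgne : ∀ m : ℕ, m ≠ i → l'[m]? = l[m]? := fun m hm =>
    List.getElem?_set_ne (Ne.symm hm)
  have hu' : l'[i-1]? = some u := (hgne (i-1) (by omega)).trans hu
  have hw' : l'[i+1]? = some w := (hgne (i+1) (by omega)).trans hw
  have hch' : l'.Chain' (· ⋖ ·) := by
    apply chain'_of_pairs
    intro j p q hp hq
    by_cases hji : j = i
    · subst hji
      rw [hgi] at hp
      rw [(hgne (j+1) (by omega)).trans hw] at hq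
      rw [← Option.some.inj hp, ← Option.some.inj hq]
      exact E2
    · by_cases hj1i : j + 1 = i
      · have hji1 : j = i - 1 := by omega
        subst hji1
        rw [hi, hgi] at hq
        rw [(hgne _ hji).trans hu] at hp
        rw [← Option.some.inj hp, ← Option.some.inj hq]
        exact E1
      · exact chain'_pair hch ((hgne j hji).symm.trans hp) ((hgne (j+1) hj1i).symm.trans hq)
  have hαE : ord (lab v' w) = α := by rw [E4, hαeq]
  have hβE : ord (lab u v') = β := by rw [E3, hβeq]
  have hlw : labelWord (fun a b : L => ord (lab a b)) l' =
      (((labelWord (fun a b : L => ord (lab a b)) l).set (i-1) β).set i α) := by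
    apply List.ext_getElem?
    intro n
    by_cases hn : n = i
    · subst hn
      have hL : (labelWord (fun a b : L => ord (lab a b)) l')[n]? = some (ord (lab v' w)) :=
        labelWord_getElem? l' n hgi hw'
      rw [hL, hαE]
      rw [List.getElem?_set_self (by rw [List.length_set, labelWord_length]; omega)]
    · by_cases hn1 : n = i - 1
      · subst hn1
        have hL : (labelWord (fun a b : L => ord (lab a b)) l')[i-1]? =
            some (ord (lab u v')) := labelWord_getElem? l' (i-1) hu' (by rw [hi]; exact hgi)
        rw [hL, hβE]
        rw [List.getElem?_set_ne (by omega),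
          List.getElem?_set_self (by rw [labelWord_length]; omega)]
      · have hn1i : n + 1 ≠ i := by omega
        rw [List.getElem?_set_ne (Ne.symm hn), List.getElem?_set_ne (by omega)]
        by_cases hlen : n + 1 < l.length
        · have h1 : l[n]? = some l[n] := List.getElem?_eq_getElem (by omega)
          have h2 : l[n+1]? = some l[n+1] := List.getElem?_eq_getElem hlen
          rw [labelWord_getElem? l' n ((hgne n hn).trans h1) ((hgne (n+1) hn1i).trans h2),
            labelWord_getElem? l n h1 h2]
        · rw [labelWord_getElem?_none l' n (by rw [hl'def, List.length_set]; exact hlen),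
            labelWord_getElem?_none l n hlen]
  have hnil' : l' ≠ [] := by
    intro h
    apply hnil
    have := congrArg List.length h
    rw [hl'def, List.length_set] at this
    exact List.length_eq_zero_iff.mp this
  refine ⟨l', ⟨⟨hnil', hch'⟩, by rw [hl'def, List.length_set], hgne, α, β, hα, hβ, hlw⟩, ?_⟩
  rintro l'' ⟨⟨hnil'', hch''⟩, hlen'', hagree'', α'', β'', hα'', hβ'', hw''⟩
  rw [Option.some.inj (hα''.symm.trans hα), Option.some.inj (hβ''.symm.trans hβ)] at hw''
  apply List.ext_getElem?
  intro m
  by_cases hm : m = i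
  · subst hm
    have hm'' : m < l''.length := by rw [hlen'']; exact hilen
    obtain ⟨v'', hv''⟩ : ∃ t, l''[m]? = some t := ⟨l''[m], List.getElem?_eq_getElem hm''⟩
    have hu'' : l''[m-1]? = some u := (hagree'' (m-1) (by omega)).trans hu
    have hLW : (labelWord (fun a b : L => ord (lab a b)) l'')[m-1]? =
        some (ord (lab u v'')) := labelWord_getElem? l'' (m-1) hu'' (by rw [hi]; exact hv'')
    rw [hw'', List.getElem?_set_ne (by omega),
      List.getElem?_set_self (by rw [labelWord_length]; omega)] at hLW
    have hlabeq : ord (lab u v'') = ord (lab v w) := by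
      rw [← hβeq]; exact (Option.some.inj hLW).symm
    have hcuv'' : u ⋖ v'' := chain'_pair hch'' hu'' (by rw [hi]; exact hv'')
    have : lab u v'' = lab v w :=
      hord _ _ (lab_atom ord lab hlab hcuv'') (lab_atom ord lab hlab hcvw) hlabeq
    have hveq : v'' = v' := by
      rw [← lab_sup ord lab hlab hcuv'', this, hv'def]
    rw [hv'', hgi, hveq]
  · rw [hagree'' m hm, hgne m hm]
end Switch


/-- **Proposition.** Minimum labelings of geometric lattices are EW-labelings.
Let `L` be a finite geometric lattice (atomistic and semimodular) whose set of atoms is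
totally ordered via an enumeration `ord` injective on atoms, and let `lab x y` be the
smallest atom `a` with `x ⊔ a = y` for each cover `x ⋖ y`.  Then the edge labeling
`x ⋖ y ↦ ord (lab x y)` is an ER-labeling satisfying the rank two switching property,
and in each interval each maximal chain is uniquely determined by its word of labels. -/
theorem minimum_labeling_isEW {L : Type} [Lattice L] [Fintype L] [OrderBot L]
    (hatomistic : ∀ x : L, ∃ S : Finset L, (∀ a ∈ S, IsAtom a) ∧ x = S.sup id)
    (hsemimod : ∀ a b : L, a ⊓ b ⋖ a → b ⋖ a ⊔ b)
    (ord : L → ℕ) (hord : ∀ a b : L, IsAtom a → IsAtom b → ord a = ord b → a = b)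
    (lab : L → L → L)
    (hlab : ∀ x y : L, x ⋖ y → IsAtom (lab x y) ∧ x ⊔ lab x y = y ∧
      ∀ a : L, IsAtom a → x ⊔ a = y → ord (lab x y) ≤ ord a) :
    IsER (fun x y : L => ord (lab x y)) ∧
    RankTwoSwitch (fun x y : L => ord (lab x y)) ∧
    (∀ (x y : L) (l l' : List L), SatChainIn x y l → SatChainIn x y l' →
      labelWord (fun x y : L => ord (lab x y)) l =
        labelWord (fun x y : L => ord (lab x y)) l' → l = l') := by
  refine ⟨?_, switch_aux hsemimod ord hord lab hlab,
    fun x y l l' h1 h2 h3 => word_inj ord hord lab hlab l l' x y h1 h2 h3⟩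
  intro x y hxy
  exact ER_aux hatomistic hsemimod ord hord lab hlab _ x y le_rfl hxy
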